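/- Let K be a PLCW complex, A ∈ K an n-cell, and φ : B^n → A a fixed characteristic map. Then the PLCW decomposition L of ∂B^n for which φ|_{∂B^n} : L → K^{n-1} is a regular cellular map is unique; its cells are exactly the closures of the connected components of φ^{-1}(K̊ᵢ), where Kᵢ runs over the cells of the (n−1)-skeleton K^{n-1}. -/

import Mathlib

open Set

noncomputable section

/-- `ℝ^n` modeled as `Fin n → ℝ`. -/
abbrev E (n : ℕ) : Type := Fin n → ℝ

/-- The standard `n`-ball `B^n = [-1,1]^n ⊆ ℝ^n` (cube model). -/
def Ball (n : ℕ) : Set (E n) := Set.pi Set.univ fun _ => Set.Icc (-1 : ℝ) 1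

/-- The last coordinate `x_n` of a point of `ℝ^n` (junk value `0` if `n = 0`). -/
def lastC {n : ℕ} (x : E n) : ℝ := if h : 0 < n then x ⟨n - 1, by omega⟩ else 0

/-- The upper half-ball `B^n₊ = B^n ∩ {x_n ≥ 0}`. -/
def BallPlus (n : ℕ) : Set (E n) := {x ∈ Ball n | 0 ≤ lastC x}

/-- The lower half-ball `B^n₋ = B^n ∩ {x_n ≤ 0}`. -/
def BallMinus (n : ℕ) : Set (E n) := {x ∈ Ball n | lastC x ≤ 0}

/-- The middle disk `B^n₀ = B^n ∩ {x_n = 0}`. -/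
def BallZero (n : ℕ) : Set (E n) := {x ∈ Ball n | lastC x = 0}

/-- The equator `E = S^{n-1} ∩ {x_n = 0}` of the boundary sphere `∂B^n`. -/
def Equator (n : ℕ) : Set (E n) := {x ∈ intrinsicFrontier ℝ (Ball n) | lastC x = 0}

variable {V W : Type} [NormedAddCommGroup V] [NormedSpace ℝ V]
  [NormedAddCommGroup W] [NormedSpace ℝ W]

/-- A convex cell: a nonempty compact convex polyhedron, i.e. the convex hull
of a finite set of points. -/
def IsConvexCell (C : Set V) : Prop :=
  C.Nonempty ∧ ∃ s : Finset V, C = convexHull ℝ (s : Set V)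

/-- The dimension of a subset: the rank of the direction of its affine span. -/
def setDim (C : Set V) : ℕ := Module.finrank ℝ (affineSpan ℝ C).direction

/-- `f` is piecewise linear (PL) on `X` : there is a decomposition of `X` into finitely many
convex cells on each of which `f` is affine. -/
def IsPLOn (X : Set V) (f : V → W) : Prop :=
  ∃ S : Finset (Set V), (∀ C ∈ S, IsConvexCell C) ∧ X = ⋃ C ∈ S, C ∧
    ∀ C ∈ S, ∃ g : V →ᵃ[ℝ] W, EqOn f g C

/-- `f` is a PL homeomorphism from `X` onto `Y` (with PL inverse). -/
def IsPLHomeoOn (X : Set V) (Y : Set W) (f : V → W) : Prop :=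
  IsPLOn X f ∧ BijOn f X Y ∧
    ∃ g : W → V, IsPLOn Y g ∧ (∀ x ∈ X, g (f x) = x) ∧ ∀ y ∈ Y, f (g y) = y

/-- A regular map on the ball, i.e. a characteristic map: a PL map defined on `B^n`
whose restriction to the interior of `B^n` is injective. -/
def IsCharMap (n : ℕ) (φ : E n → V) : Prop :=
  IsPLOn (Ball n) φ ∧ InjOn φ (intrinsicInterior ℝ (Ball n))

/-- A "cell datum" in `V`: a dimension, a carrier, together with a decomposition of the
carrier into an open part and a boundary part. -/
structure Cell (V : Type) where
  dim : ℕ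
  toSet : Set V
  intSet : Set V
  bdSet : Set V

/-- `φ` is a characteristic map of the cell `C`: `φ : B^n → ℝ^N` is PL and injective
on the interior of `B^n`, with `C = φ(B^n)`, `C̊ = φ(Int B^n)` and `Ċ = φ(∂B^n)`. -/
def Cell.IsCharMapOf (C : Cell V) {n : ℕ} (φ : E n → V) : Prop :=
  C.dim = n ∧ IsCharMap n φ ∧ C.toSet = φ '' Ball n ∧
    C.intSet = φ '' intrinsicInterior ℝ (Ball n) ∧
    C.bdSet = φ '' intrinsicFrontier ℝ (Ball n)

/-- `C` is a generalized cell: it admits a characteristic map. -/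
def Cell.IsGCell (C : Cell V) : Prop := ∃ φ : E C.dim → V, C.IsCharMapOf φ

/-- A generalized cell complex: a finite collection of generalized cells with pairwise
disjoint interiors, such that the boundary of each cell is a union of cells
(necessarily of smaller dimension). -/
def IsGCC (K : Set (Cell V)) : Prop :=
  K.Finite ∧ (∀ C ∈ K, C.IsGCell) ∧
    (K.Pairwise fun A B => Disjoint A.intSet B.intSet) ∧
    ∀ C ∈ K, ∃ S ⊆ K, (∀ D ∈ S, D.dim < C.dim) ∧ C.bdSet = ⋃ D ∈ S, D.toSet

/-- The support `|K|` of a complex. -/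
def gccSupport (K : Set (Cell V)) : Set V := ⋃ C ∈ K, C.toSet

/-- The dimension of a complex. -/
def gccDim (K : Set (Cell V)) : ℕ := sSup (Cell.dim '' K)

/-- The `k`-skeleton of a complex. -/
def gccSkeleton (K : Set (Cell V)) (k : ℕ) : Set (Cell V) := {C ∈ K | C.dim ≤ k}

/-- A regular cellular map `f : L → K`: a PL map of supports carrying each cell of `L`
onto a cell of `K`, in such a way that composition with any characteristic map is again
a characteristic map. -/
def IsRegularCellularMap (L : Set (Cell V)) (K : Set (Cell W)) (f : V → W) : Prop :=
  IsPLOn (gccSupport L) f ∧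
    ∀ C ∈ L, ∃ C' ∈ K, C'.toSet = f '' C.toSet ∧
      ∀ (n : ℕ) (φ : E n → V), C.IsCharMapOf φ → C'.IsCharMapOf (f ∘ φ)

/-- Auxiliary inductive definition: `IsPLCWAux n K` says that `K` is a PLCW complex of
dimension at most `n`. -/
def IsPLCWAux : (n : ℕ) → {V : Type} → [NormedAddCommGroup V] → [NormedSpace ℝ V] →
    Set (Cell V) → Prop
  | 0, _V, _, _, K => IsGCC K ∧ ∀ C ∈ K, C.dim = 0
  | n + 1, _V, _, _, K =>
      IsGCC K ∧ (∀ C ∈ K, C.dim ≤ n + 1) ∧ IsPLCWAux n (gccSkeleton K n) ∧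
      ∀ C ∈ K, C.dim = n + 1 → ∀ φ : E (n + 1) → _V, C.IsCharMapOf φ →
        ∃ L : Set (Cell (E (n + 1))), IsPLCWAux n L ∧
          gccSupport L = intrinsicFrontier ℝ (Ball (n + 1)) ∧
          IsRegularCellularMap L (gccSkeleton K n) φ

/-- `K` is a PLCW complex. -/
def IsPLCW (K : Set (Cell V)) : Prop := IsPLCWAux (gccDim K) K

/-- `L` is the pullback decomposition `φ⁻¹(K)` of `∂B^n` for an `n`-cell of `K` with
characteristic map `φ`: a PLCW decomposition of `∂B^n` such that `φ|_{∂B^n} : L → K^{n-1}`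
is a regular cellular map. -/
def IsPullbackDecomp (n : ℕ) (L : Set (Cell (E n))) (K : Set (Cell V)) (φ : E n → V) : Prop :=
  IsPLCW L ∧ gccSupport L = intrinsicFrontier ℝ (Ball n) ∧
    IsRegularCellularMap L (gccSkeleton K (n - 1)) φ

/-- The join `XY` of two subsets of `ℝ^N`: all convex combinations `a•x + b•y`,
`x ∈ X`, `y ∈ Y`, `a, b ≥ 0`, `a + b = 1`. -/
def joinSet (X Y : Set V) : Set V :=
  {p | ∃ x ∈ X, ∃ y ∈ Y, ∃ a b : ℝ, 0 ≤ a ∧ 0 ≤ b ∧ a + b = 1 ∧ p = a • x + b • y}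

/-- The open join: convex combinations with strictly positive coefficients. -/
def openJoinSet (X Y : Set V) : Set V :=
  {p | ∃ x ∈ X, ∃ y ∈ Y, ∃ a b : ℝ, 0 < a ∧ 0 < b ∧ a + b = 1 ∧ p = a • x + b • y}

/-- `X` and `Y` are independent: every point of the join `XY` is uniquely a convex
combination `a•x + b•y` of a point of `X` and a point of `Y`. -/
def JoinIndep (X Y : Set V) : Prop :=
  ∀ x₁ ∈ X, ∀ y₁ ∈ Y, ∀ x₂ ∈ X, ∀ y₂ ∈ Y, ∀ a₁ b₁ a₂ b₂ : ℝ,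
    0 ≤ a₁ → 0 ≤ b₁ → a₁ + b₁ = 1 → 0 ≤ a₂ → 0 ≤ b₂ → a₂ + b₂ = 1 →
    a₁ • x₁ + b₁ • y₁ = a₂ • x₂ + b₂ • y₂ →
    a₁ = a₂ ∧ (0 < a₁ → x₁ = x₂) ∧ (0 < b₁ → y₁ = y₂)

/-- The join of two cells. -/
def Cell.join (A B : Cell V) : Cell V :=
  ⟨A.dim + B.dim + 1, joinSet A.toSet B.toSet, openJoinSet A.intSet B.intSet,
    joinSet A.toSet B.toSet \ openJoinSet A.intSet B.intSet⟩

/-- The cell consisting of a single point. -/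
def Cell.pt (a : V) : Cell V := ⟨0, {a}, {a}, ∅⟩

/-- The image of a cell under a map. -/
def Cell.map (f : V → W) (C : Cell V) : Cell W :=
  ⟨C.dim, f '' C.toSet, f '' C.intSet, f '' C.bdSet⟩

/-- The join `KL` of two complexes: all cells of `K`, all cells of `L`, and all joins
`KᵢLⱼ` of a cell of `K` with a cell of `L`. -/
def gccJoin (K L : Set (Cell V)) : Set (Cell V) := K ∪ L ∪ Set.image2 Cell.join K L

/-- The cone `aL` over a complex `L` with vertex `a`. -/
def gccCone (a : V) (L : Set (Cell V)) : Set (Cell V) := gccJoin {Cell.pt a} L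

/-- The ball `B^n` as a cell of `ℝ^n`. -/
def ballCell (n : ℕ) : Cell (E n) :=
  ⟨n, Ball n, intrinsicInterior ℝ (Ball n), intrinsicFrontier ℝ (Ball n)⟩

/-- The upper half-ball `B^n₊` as a cell of `ℝ^n`. -/
def halfPlusCell (n : ℕ) : Cell (E n) :=
  ⟨n, BallPlus n, intrinsicInterior ℝ (BallPlus n), intrinsicFrontier ℝ (BallPlus n)⟩

/-- The lower half-ball `B^n₋` as a cell of `ℝ^n`. -/
def halfMinusCell (n : ℕ) : Cell (E n) :=
  ⟨n, BallMinus n, intrinsicInterior ℝ (BallMinus n), intrinsicFrontier ℝ (BallMinus n)⟩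

/-- The middle disk `B^n₀` as an `(n-1)`-cell of `ℝ^n`. -/
def midCell (n : ℕ) : Cell (E n) :=
  ⟨n - 1, BallZero n, intrinsicInterior ℝ (BallZero n), intrinsicFrontier ℝ (BallZero n)⟩

/-- `K'` is obtained from `K` by the radial subdivision of the cell `C = φ(B^n)`:
`C` is replaced by the cone cells `φ(O), φ(O L₁), …, φ(O L_k)`, where `L₁,…,L_k` are
the cells of the pullback decomposition `φ⁻¹(K)` of `∂B^n`. -/
def RadialSubdiv (K' K : Set (Cell V)) : Prop :=
  IsPLCW K ∧ ∃ C ∈ K, 0 < C.dim ∧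
    ∃ φ : E C.dim → V, C.IsCharMapOf φ ∧
      ∃ L : Set (Cell (E C.dim)), IsPullbackDecomp C.dim L K φ ∧
        K' = (K \ {C}) ∪
          insert (Cell.pt (φ 0)) ((fun D => Cell.map φ ((Cell.pt (0 : E C.dim)).join D)) '' L)

/-- `K'` is obtained from `K` by the elementary subdivision of the cell `C = φ(B^n)`:
assuming the equator `E ⊆ ∂B^n` is a union of cells of the pullback decomposition
`φ⁻¹(K)`, the cell `C` is replaced by the three cells
`C₊ = φ(B^n₊)`, `C₋ = φ(B^n₋)`, `C₀ = φ(B^n₀)`. -/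
def ElemSubdiv (K' K : Set (Cell V)) : Prop :=
  IsPLCW K ∧ ∃ C ∈ K, 0 < C.dim ∧
    ∃ φ : E C.dim → V, C.IsCharMapOf φ ∧
      (∃ L : Set (Cell (E C.dim)), IsPullbackDecomp C.dim L K φ ∧
        ∃ S ⊆ L, Equator C.dim = ⋃ D ∈ S, D.toSet) ∧
      K' = (K \ {C}) ∪
        {Cell.map φ (halfPlusCell C.dim), Cell.map φ (halfMinusCell C.dim),
          Cell.map φ (midCell C.dim)}

/-- `K ∼e L` : `K` can be obtained from `L` by a finite sequence of elementary
subdivisions and their inverses. -/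
def ElemEquiv (K L : Set (Cell V)) : Prop :=
  Relation.ReflTransGen (fun A B => ElemSubdiv B A ∨ ElemSubdiv A B) K L

/-- `L` is a subdivision of `K` (notation of the paper: `L ⊲ K`). -/
def IsSubdivision (L K : Set (Cell V)) : Prop :=
  IsPLCW L ∧ IsPLCW K ∧ gccSupport L = gccSupport K ∧
    ∀ C ∈ K, ∃ S ⊆ L, C.intSet = ⋃ D ∈ S, D.intSet

/-- A cell which is an honest (linearly embedded) simplex. -/
def Cell.IsSimplexCell (C : Cell V) : Prop :=
  ∃ s : Finset V, AffineIndependent ℝ (fun p : s => (p : V)) ∧ s.card = C.dim + 1 ∧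
    C.toSet = convexHull ℝ (s : Set V) ∧
    C.intSet = intrinsicInterior ℝ (convexHull ℝ (s : Set V)) ∧
    C.bdSet = intrinsicFrontier ℝ (convexHull ℝ (s : Set V))

/-- A triangulation: a finite simplicial complex, i.e. all cells are simplices, faces of
cells are cells, and the intersection of two cells is a (possibly empty) common face. -/
def IsTriangulation (T : Set (Cell V)) : Prop :=
  T.Finite ∧ (∀ C ∈ T, C.IsSimplexCell) ∧
    (∀ C ∈ T, ∀ F : Set V, F.Nonempty → IsExtreme ℝ C.toSet F → ∃ D ∈ T, D.toSet = F) ∧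
    ∀ A ∈ T, ∀ B ∈ T, (A.toSet ∩ B.toSet).Nonempty →
      IsExtreme ℝ A.toSet (A.toSet ∩ B.toSet) ∧ IsExtreme ℝ B.toSet (A.toSet ∩ B.toSet)

end

noncomputable section

section Aux

variable {V W : Type} [NormedAddCommGroup V] [NormedSpace ℝ V]
  [NormedAddCommGroup W] [NormedSpace ℝ W]

lemma ball_compact (d : ℕ) : IsCompact (Ball d) :=
  isCompact_univ_pi fun _ => isCompact_Icc

lemma ball_closed (d : ℕ) : IsClosed (Ball d) :=
  isClosed_set_pi fun _ _ => isClosed_Icc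

lemma ball_nonempty (d : ℕ) : (Ball d).Nonempty :=
  ⟨0, fun i _ => by constructor <;> norm_num⟩

lemma ball_convex (d : ℕ) : Convex ℝ (Ball d) :=
  convex_pi fun _ _ => convex_Icc _ _

lemma closure_interior_ball (d : ℕ) : closure (interior (Ball d)) = Ball d := by
  rw [Ball, interior_pi_set Set.finite_univ, closure_pi_set]
  simp [interior_Icc, closure_Ioo (show (-1 : ℝ) ≠ 1 by norm_num)]

lemma closure_intrinsicInterior_ball (d : ℕ) :
    closure (intrinsicInterior ℝ (Ball d)) = Ball d := by
  apply subset_antisymm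
  · have h1 : closure (intrinsicInterior ℝ (Ball d)) ⊆ closure (Ball d) :=
      closure_mono intrinsicInterior_subset
    rwa [(ball_closed d).closure_eq] at h1
  · have h2 : closure (interior (Ball d)) ⊆ closure (intrinsicInterior ℝ (Ball d)) :=
      closure_mono interior_subset_intrinsicInterior
    rwa [closure_interior_ball d] at h2

lemma intrinsicInterior_ball_nonempty (d : ℕ) :
    (intrinsicInterior ℝ (Ball d)).Nonempty := by
  by_contra h
  rw [not_nonempty_iff_eq_empty] at h
  have h2 := closure_intrinsicInterior_ball d
  rw [h, closure_empty] at h2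
  exact (ball_nonempty d).ne_empty h2.symm

lemma intrinsicInterior_ball_preconnected (d : ℕ) :
    IsPreconnected (intrinsicInterior ℝ (Ball d)) := by
  apply IsPreconnected.subset_closure ((ball_convex d).interior.isPreconnected)
  · exact interior_subset_intrinsicInterior
  · rw [closure_interior_ball]
    exact intrinsicInterior_subset

lemma ball_eq_union (d : ℕ) :
    intrinsicInterior ℝ (Ball d) ∪ intrinsicFrontier ℝ (Ball d) = Ball d := by
  rw [intrinsicInterior_union_intrinsicFrontier, intrinsicClosure_eq_closure,
    (ball_closed d).closure_eq]

lemma continuousWithinAt_biUnion_finset {f : V → W} :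
    ∀ S : Finset (Set V), (∀ C ∈ S, ∀ x : V, ContinuousWithinAt f C x) →
      ∀ x : V, ContinuousWithinAt f (⋃ C ∈ (S : Set (Set V)), C) x := by
  classical
  intro S
  induction S using Finset.induction_on with
  | empty =>
    intro _ x
    simp only [Finset.coe_empty, Set.biUnion_empty]
    rw [ContinuousWithinAt, nhdsWithin_empty]
    exact Filter.tendsto_bot
  | insert a s hnotmem ih =>
    intro h x
    simp only [Finset.coe_insert, Set.biUnion_insert]
    exact (h a (Finset.mem_insert_self a s) x).union
      (ih (fun C hC x => h C (Finset.mem_insert_of_mem hC) x) x)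

lemma isPLOn_continuousOn [FiniteDimensional ℝ V] {X : Set V} {f : V → W}
    (h : IsPLOn X f) : ContinuousOn f X := by
  obtain ⟨S, hcell, hcover, haff⟩ := h
  have key : ∀ C ∈ S, ∀ x : V, ContinuousWithinAt f C x := by
    intro C hC x
    by_cases hx : x ∈ C
    · obtain ⟨g, hg⟩ := haff C hC
      exact (g.continuous_of_finiteDimensional.continuousWithinAt).congr hg (hg hx)
    · obtain ⟨hne, s, rfl⟩ := hcell C hC
      have hcl : IsClosed (convexHull ℝ (s : Set V)) :=
        (s.finite_toSet.isCompact_convexHull ℝ).isClosed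
      exact continuousWithinAt_of_notMem_closure (by rwa [hcl.closure_eq])
  intro x _
  rw [hcover]
  exact continuousWithinAt_biUnion_finset S key x

/-- Basic consequences of admitting a characteristic map. -/
lemma charMap_facts [FiniteDimensional ℝ V] {d : ℕ} {C : Cell V} {ψ : E d → V}
    (h : C.IsCharMapOf ψ) :
    ContinuousOn ψ (Ball d) ∧ IsClosed C.toSet ∧
      C.toSet = C.intSet ∪ C.bdSet ∧ closure C.intSet = C.toSet ∧
      C.intSet.Nonempty ∧ IsPreconnected C.intSet := by
  obtain ⟨hdim, ⟨hPL, hinj⟩, htS, hiS, hbS⟩ := h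
  have hcont : ContinuousOn ψ (Ball d) := isPLOn_continuousOn hPL
  have hclosed : IsClosed C.toSet := by
    rw [htS]; exact ((ball_compact d).image_of_continuousOn hcont).isClosed
  refine ⟨hcont, hclosed, ?_, ?_, ?_, ?_⟩
  · rw [htS, hiS, hbS, ← Set.image_union, ball_eq_union]
  · apply subset_antisymm
    · rw [← hclosed.closure_eq]
      apply closure_mono
      rw [htS, hiS]
      exact Set.image_mono intrinsicInterior_subset
    · have h1 : ψ '' closure (intrinsicInterior ℝ (Ball d)) ⊆
          closure (ψ '' intrinsicInterior ℝ (Ball d)) :=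
        ContinuousOn.image_closure (by rw [closure_intrinsicInterior_ball]; exact hcont)
      rw [htS, hiS]
      intro y hy
      obtain ⟨z, hz, rfl⟩ := hy
      refine h1 ⟨z, ?_, rfl⟩
      rw [closure_intrinsicInterior_ball]
      exact hz
  · rw [hiS]
    exact (intrinsicInterior_ball_nonempty d).image ψ
  · rw [hiS]
    exact (intrinsicInterior_ball_preconnected d).image ψ
      (hcont.mono intrinsicInterior_subset)

lemma IsPLCWAux.isGCC [FiniteDimensional ℝ V] :
    ∀ (m : ℕ) (L : Set (Cell V)), IsPLCWAux m L → IsGCC L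
  | 0, _, h => h.1
  | _ + 1, _, h => h.1

lemma Cell.ext' {A B : Cell V} (h1 : A.dim = B.dim) (h2 : A.toSet = B.toSet)
    (h3 : A.intSet = B.intSet) (h4 : A.bdSet = B.bdSet) : A = B := by
  cases A; cases B; simp_all

lemma gcc_toSet_eq_union [FiniteDimensional ℝ V] {M : Set (Cell V)} (hM : IsGCC M)
    {C : Cell V} (hC : C ∈ M) : C.toSet = C.intSet ∪ C.bdSet := by
  obtain ⟨ψ, hψ⟩ := hM.2.1 C hC
  exact (charMap_facts hψ).2.2.1

lemma gcc_intSet_subset_toSet [FiniteDimensional ℝ V] {M : Set (Cell V)} (hM : IsGCC M)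
    {C : Cell V} (hC : C ∈ M) : C.intSet ⊆ C.toSet := by
  rw [gcc_toSet_eq_union hM hC]; exact Set.subset_union_left

lemma gcc_toSet_closed [FiniteDimensional ℝ V] {M : Set (Cell V)} (hM : IsGCC M)
    {C : Cell V} (hC : C ∈ M) : IsClosed C.toSet := by
  obtain ⟨ψ, hψ⟩ := hM.2.1 C hC
  exact (charMap_facts hψ).2.1

lemma gcc_closure_intSet [FiniteDimensional ℝ V] {M : Set (Cell V)} (hM : IsGCC M)
    {C : Cell V} (hC : C ∈ M) : closure C.intSet = C.toSet := by
  obtain ⟨ψ, hψ⟩ := hM.2.1 C hC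
  exact (charMap_facts hψ).2.2.2.1

lemma gcc_intSet_nonempty [FiniteDimensional ℝ V] {M : Set (Cell V)} (hM : IsGCC M)
    {C : Cell V} (hC : C ∈ M) : C.intSet.Nonempty := by
  obtain ⟨ψ, hψ⟩ := hM.2.1 C hC
  exact (charMap_facts hψ).2.2.2.2.1

lemma gcc_intSet_preconnected [FiniteDimensional ℝ V] {M : Set (Cell V)} (hM : IsGCC M)
    {C : Cell V} (hC : C ∈ M) : IsPreconnected C.intSet := by
  obtain ⟨ψ, hψ⟩ := hM.2.1 C hC
  exact (charMap_facts hψ).2.2.2.2.2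

/-- In a g.c.c., each cell is covered by the open cells of dimension at most its own. -/
lemma gcc_toSet_subset_biUnion [FiniteDimensional ℝ V] {M : Set (Cell V)} (hM : IsGCC M) :
    ∀ (k : ℕ), ∀ C ∈ M, C.dim ≤ k →
      C.toSet ⊆ ⋃ G ∈ {G ∈ M | G.dim ≤ k}, G.intSet := by
  intro k
  induction k using Nat.strong_induction_on with
  | _ k ih =>
    intro C hC hk x hx
    rw [gcc_toSet_eq_union hM hC] at hx
    cases hx with
    | inl h => exact Set.mem_biUnion ⟨hC, hk⟩ h
    | inr h =>
      obtain ⟨S, hSM, hSdim, hbd⟩ := hM.2.2.2 C hC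
      rw [hbd] at h
      obtain ⟨F, hF, hxF⟩ := Set.mem_iUnion₂.mp h
      have hFM : F ∈ M := hSM hF
      have hFd : F.dim < k := lt_of_lt_of_le (hSdim F hF) hk
      have := ih F.dim hFd F hFM le_rfl hxF
      obtain ⟨G, hG, hxG⟩ := Set.mem_iUnion₂.mp this
      exact Set.mem_biUnion ⟨hG.1, le_trans hG.2 (le_of_lt hFd)⟩ hxG

/-- In a g.c.c., the open cells cover the support. -/
lemma gcc_support_eq [FiniteDimensional ℝ V] {M : Set (Cell V)} (hM : IsGCC M) :
    gccSupport M = ⋃ G ∈ M, G.intSet := by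
  apply subset_antisymm
  · intro x hx
    obtain ⟨C, hC, hxC⟩ := Set.mem_iUnion₂.mp hx
    have := gcc_toSet_subset_biUnion hM C.dim C hC le_rfl hxC
    obtain ⟨G, hG, hxG⟩ := Set.mem_iUnion₂.mp this
    exact Set.mem_biUnion hG.1 hxG
  · exact Set.iUnion₂_mono fun G hG => gcc_intSet_subset_toSet hM hG

/-- In a g.c.c., the boundary of a cell is disjoint from its open part. -/
lemma gcc_bdSet_eq [FiniteDimensional ℝ V] {M : Set (Cell V)} (hM : IsGCC M)
    {C : Cell V} (hC : C ∈ M) : C.bdSet = C.toSet \ C.intSet := by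
  have hdisj : ∀ x ∈ C.bdSet, x ∉ C.intSet := by
    intro x hxb hxi
    obtain ⟨S, hSM, hSdim, hbd⟩ := hM.2.2.2 C hC
    rw [hbd] at hxb
    obtain ⟨F, hF, hxF⟩ := Set.mem_iUnion₂.mp hxb
    have := gcc_toSet_subset_biUnion hM F.dim F (hSM hF) le_rfl hxF
    obtain ⟨G, hG, hxG⟩ := Set.mem_iUnion₂.mp this
    have hGC : G ≠ C := by
      intro h
      have h1 := hSdim F hF
      have h2 := hG.2
      rw [h] at h2
      omega
    exact (hM.2.2.1 hG.1 hC hGC).le_bot ⟨hxG, hxi⟩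
  have hun := gcc_toSet_eq_union hM hC
  apply subset_antisymm
  · intro x hx
    exact ⟨hun ▸ Set.mem_union_right _ hx, hdisj x hx⟩
  · intro x hx
    rcases (hun ▸ hx.1 : x ∈ C.intSet ∪ C.bdSet) with h | h
    · exact absurd h hx.2
    · exact h

/-- The image cell data of a cell of a pullback decomposition. -/
lemma pullback_image_cell {n : ℕ} {K : Set (Cell V)} {L : Set (Cell (E n))} {φ : E n → V}
    (hLg : IsGCC L) (hreg : IsRegularCellularMap L (gccSkeleton K (n - 1)) φ)
    {D : Cell (E n)} (hD : D ∈ L) :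
    ∃ Ki ∈ gccSkeleton K (n - 1), φ '' D.intSet = Ki.intSet ∧ Ki.dim = D.dim := by
  obtain ⟨ψ, hψ⟩ := hLg.2.1 D hD
  obtain ⟨Ki, hKi, htS, hchar⟩ := hreg.2 D hD
  have hKiψ := hchar D.dim ψ hψ
  refine ⟨Ki, hKi, ?_, hKiψ.1⟩
  rw [hKiψ.2.2.2.1, hψ.2.2.2.1, Set.image_comp]

/-- The open part of a cell of a pullback decomposition is precisely the connected
component, inside `∂Bⁿ ∩ φ⁻¹(K̊ᵢ)`, of any of its points. -/
lemma pullback_component_eq {n : ℕ} {K : Set (Cell V)} (hKg : IsGCC K)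
    {L : Set (Cell (E n))} {φ : E n → V} (hL : IsPullbackDecomp n L K φ)
    {D : Cell (E n)} (hD : D ∈ L) {Ki : Cell V} (hKi : Ki ∈ gccSkeleton K (n - 1))
    (him : φ '' D.intSet = Ki.intSet) (hdim : Ki.dim = D.dim)
    {x : E n} (hx : x ∈ D.intSet) :
    connectedComponentIn (intrinsicFrontier ℝ (Ball n) ∩ φ ⁻¹' Ki.intSet) x = D.intSet := by
  obtain ⟨hPLCW, hsupp, hreg⟩ := hL
  have hLg : IsGCC L := IsPLCWAux.isGCC _ _ hPLCW
  set U : Set (E n) := intrinsicFrontier ℝ (Ball n) ∩ φ ⁻¹' Ki.intSet with hU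
  have hcover : intrinsicFrontier ℝ (Ball n) = ⋃ D' ∈ L, D'.intSet := by
    rw [← hsupp, gcc_support_eq hLg]
  have hsub_sph : ∀ D' ∈ L, D'.intSet ⊆ intrinsicFrontier ℝ (Ball n) := by
    intro D' hD' y hy
    rw [← hsupp]
    exact Set.mem_biUnion hD' (gcc_intSet_subset_toSet hLg hD' hy)
  have hgood : ∀ D' ∈ L, ∀ y ∈ D'.intSet, y ∈ U →
      φ '' D'.intSet = Ki.intSet ∧ D'.dim = Ki.dim := by
    intro D' hD' y hy hyU
    obtain ⟨Ki', hKi', him', hdim'⟩ := pullback_image_cell hLg hreg hD'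
    have hEq : Ki' = Ki := by
      by_contra hne
      have hd := hKg.2.2.1 hKi'.1 hKi.1 hne
      have h1 : φ y ∈ Ki'.intSet := him' ▸ Set.mem_image_of_mem φ hy
      exact hd.le_bot ⟨h1, hyU.2⟩
    rw [hEq] at him' hdim'
    exact ⟨him', hdim'.symm⟩
  have hDU : D.intSet ⊆ U := by
    intro y hy
    exact ⟨hsub_sph D hD hy,
      by rw [Set.mem_preimage, ← him]; exact Set.mem_image_of_mem φ hy⟩
  have hxU : x ∈ U := hDU hx
  have hUin : ∀ y ∈ U, ∃ D' ∈ L, y ∈ D'.intSet ∧ φ '' D'.intSet = Ki.intSet ∧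
      D'.dim = Ki.dim := by
    intro y hyU
    have hy1 : y ∈ ⋃ D' ∈ L, D'.intSet := hcover ▸ hyU.1
    obtain ⟨D', hD', hy⟩ := Set.mem_iUnion₂.mp hy1
    exact ⟨D', hD', hy, hgood D' hD' y hy hyU⟩
  have hUcap : ∀ D' ∈ L, D'.dim = Ki.dim → ∀ y ∈ U, y ∈ D'.toSet → y ∈ D'.intSet := by
    intro D' hD' hd y hyU hyT
    rw [gcc_toSet_eq_union hLg hD'] at hyT
    rcases hyT with h | h
    · exact h
    · exfalso
      obtain ⟨S, hSM, hSdim, hbd⟩ := hLg.2.2.2 D' hD'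
      rw [hbd] at h
      obtain ⟨F, hF, hyF⟩ := Set.mem_iUnion₂.mp h
      have hsub := gcc_toSet_subset_biUnion hLg F.dim F (hSM hF) le_rfl hyF
      obtain ⟨G, hG, hyG⟩ := Set.mem_iUnion₂.mp hsub
      have hGd : G.dim < Ki.dim := by
        have h1 := hSdim F hF
        have h2 := hG.2
        omega
      obtain ⟨D'', hD'', hyD'', _, hd''⟩ := hUin y hyU
      have hne : G ≠ D'' := by
        intro hEq
        rw [hEq, hd''] at hGd
        omega
      exact (hLg.2.2.1 hG.1 hD'' hne).le_bot ⟨hyG, hyD''⟩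
  apply subset_antisymm
  · set t := connectedComponentIn U x with ht
    have htp : IsPreconnected t := isPreconnected_connectedComponentIn
    have htU : t ⊆ U := connectedComponentIn_subset U x
    have hxt : x ∈ t := mem_connectedComponentIn hxU
    by_contra hnot
    obtain ⟨y, hyt, hyD⟩ := Set.not_subset.mp hnot
    set Good : Set (Cell (E n)) := {D' ∈ L | D'.dim = Ki.dim ∧ D' ≠ D} with hGoodDef
    set A2 : Set (E n) := ⋃ D' ∈ Good, D'.toSet with hA2
    have hA2closed : IsClosed A2 := by
      apply Set.Finite.isClosed_biUnion (hLg.1.subset (fun G hG => hG.1))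
      intro D' hD'
      exact gcc_toSet_closed hLg hD'.1
    have hDclosed : IsClosed D.toSet := gcc_toSet_closed hLg hD
    have htsub : t ⊆ D.toSet ∪ A2 := by
      intro z hz
      obtain ⟨D', hD', hzD', _, hd'⟩ := hUin z (htU hz)
      by_cases hEq : D' = D
      · left; rw [← hEq]; exact gcc_intSet_subset_toSet hLg hD' hzD'
      · right
        exact Set.mem_biUnion ⟨hD', hd', hEq⟩ (gcc_intSet_subset_toSet hLg hD' hzD')
    have hx1 : (t ∩ D.toSet).Nonempty := ⟨x, hxt, gcc_intSet_subset_toSet hLg hD hx⟩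
    have hy2 : (t ∩ A2).Nonempty := by
      obtain ⟨D', hD', hyD', _, hd'⟩ := hUin y (htU hyt)
      have hne : D' ≠ D := fun h => hyD (h ▸ hyD')
      exact ⟨y, hyt, Set.mem_biUnion ⟨hD', hd', hne⟩ (gcc_intSet_subset_toSet hLg hD' hyD')⟩
    obtain ⟨z, hzt, hz12⟩ :=
      isPreconnected_closed_iff.mp htp D.toSet A2 hDclosed hA2closed htsub hx1 hy2
    have hzU : z ∈ U := htU hzt
    have hzInt : z ∈ D.intSet := hUcap D hD hdim.symm z hzU hz12.1
    obtain ⟨D', hD', hzD'⟩ := Set.mem_iUnion₂.mp hz12.2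
    have hzInt' : z ∈ D'.intSet := hUcap D' hD'.1 hD'.2.1 z hzU hzD'
    exact (hLg.2.2.1 hD'.1 hD hD'.2.2).le_bot ⟨hzInt', hzInt⟩
  · exact IsPreconnected.subset_connectedComponentIn
      (gcc_intSet_preconnected hLg hD) hx hDU

end Aux

/-- For an `n`-cell `A` of a PLCW complex `K` and a fixed characteristic map
`φ : B^n → A`, the PLCW decomposition `L` of `∂B^n` for which `φ|_{∂B^n} : L → K^{n-1}`
is a regular cellular map is unique; its cells are exactly the closures of the connected
components of `φ⁻¹(K̊ᵢ)`, where `Kᵢ` runs over the cells of the `(n−1)`-skeleton. -/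
theorem pullback_decomposition_unique {N n : ℕ} (hn : 0 < n)
    (K : Set (Cell (E N))) (hK : IsPLCW K)
    (A : Cell (E N)) (hA : A ∈ K) (hdim : A.dim = n)
    (φ : E n → E N) (hφ : A.IsCharMapOf φ) :
    (∀ L₁ L₂ : Set (Cell (E n)),
        IsPullbackDecomp n L₁ K φ → IsPullbackDecomp n L₂ K φ → L₁ = L₂) ∧
    ∀ L : Set (Cell (E n)), IsPullbackDecomp n L K φ →
      (∀ D ∈ L, ∃ Ki ∈ gccSkeleton K (n - 1),
          ∃ x ∈ intrinsicFrontier ℝ (Ball n) ∩ φ ⁻¹' Ki.intSet,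
            D.toSet =
              closure (connectedComponentIn (intrinsicFrontier ℝ (Ball n) ∩ φ ⁻¹' Ki.intSet) x)) ∧
      (∀ Ki ∈ gccSkeleton K (n - 1),
          ∀ x ∈ intrinsicFrontier ℝ (Ball n) ∩ φ ⁻¹' Ki.intSet,
            ∃ D ∈ L,
              D.toSet =
                closure (connectedComponentIn (intrinsicFrontier ℝ (Ball n) ∩ φ ⁻¹' Ki.intSet) x)) := by
  have hKgcc : IsGCC K := IsPLCWAux.isGCC _ K hK
  have main : ∀ L : Set (Cell (E n)), IsPullbackDecomp n L K φ →
      ∀ D ∈ L, ∃ Ki ∈ gccSkeleton K (n - 1), φ '' D.intSet = Ki.intSet ∧ Ki.dim = D.dim ∧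
        ∀ x ∈ D.intSet,
          connectedComponentIn (intrinsicFrontier ℝ (Ball n) ∩ φ ⁻¹' Ki.intSet) x
            = D.intSet := by
    intro L hL D hD
    have hLg : IsGCC L := IsPLCWAux.isGCC _ _ hL.1
    obtain ⟨Ki, hKi, him, hdim⟩ := pullback_image_cell hLg hL.2.2 hD
    exact ⟨Ki, hKi, him, hdim, fun x hx =>
      pullback_component_eq hKgcc hL hD hKi him hdim hx⟩
  constructor
  · have key : ∀ L₁ L₂ : Set (Cell (E n)), IsPullbackDecomp n L₁ K φ →
        IsPullbackDecomp n L₂ K φ → L₁ ⊆ L₂ := by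
      intro L₁ L₂ h₁ h₂ D hD
      have hLg₁ : IsGCC L₁ := IsPLCWAux.isGCC _ _ h₁.1
      have hLg₂ : IsGCC L₂ := IsPLCWAux.isGCC _ _ h₂.1
      obtain ⟨Ki, hKi, him, hdim, hcomp⟩ := main L₁ h₁ D hD
      obtain ⟨x, hx⟩ := gcc_intSet_nonempty hLg₁ hD
      have hxsph : x ∈ intrinsicFrontier ℝ (Ball n) := by
        rw [← h₁.2.1]
        exact Set.mem_biUnion hD (gcc_intSet_subset_toSet hLg₁ hD hx)
      have hxcov : x ∈ ⋃ D' ∈ L₂, D'.intSet := by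
        rw [← gcc_support_eq hLg₂, h₂.2.1]
        exact hxsph
      obtain ⟨D', hD', hx'⟩ := Set.mem_iUnion₂.mp hxcov
      obtain ⟨Ki', hKi', him', hdim', hcomp'⟩ := main L₂ h₂ D' hD'
      have hKiEq : Ki' = Ki := by
        by_contra hne
        have hd := hKgcc.2.2.1 hKi'.1 hKi.1 hne
        have h1 : φ x ∈ Ki'.intSet := him' ▸ Set.mem_image_of_mem φ hx'
        have h2 : φ x ∈ Ki.intSet := him ▸ Set.mem_image_of_mem φ hx
        exact hd.le_bot ⟨h1, h2⟩
      rw [hKiEq] at him' hdim' hcomp'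
      have hint : D.intSet = D'.intSet := by
        rw [← hcomp x hx, ← hcomp' x hx']
      have htoSet : D.toSet = D'.toSet := by
        rw [← gcc_closure_intSet hLg₁ hD, ← gcc_closure_intSet hLg₂ hD', hint]
      have hdimEq : D.dim = D'.dim := by rw [← hdim, ← hdim']
      have hbd : D.bdSet = D'.bdSet := by
        rw [gcc_bdSet_eq hLg₁ hD, gcc_bdSet_eq hLg₂ hD', hint, htoSet]
      have hDD : D = D' := Cell.ext' hdimEq htoSet hint hbd
      rw [hDD]
      exact hD'
    intro L₁ L₂ h₁ h₂
    exact subset_antisymm (key L₁ L₂ h₁ h₂) (key L₂ L₁ h₂ h₁)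
  · intro L hL
    have hLg : IsGCC L := IsPLCWAux.isGCC _ _ hL.1
    constructor
    · intro D hD
      obtain ⟨Ki, hKi, him, hdim, hcomp⟩ := main L hL D hD
      obtain ⟨x, hx⟩ := gcc_intSet_nonempty hLg hD
      have hxsph : x ∈ intrinsicFrontier ℝ (Ball n) := by
        rw [← hL.2.1]
        exact Set.mem_biUnion hD (gcc_intSet_subset_toSet hLg hD hx)
      have hxU : x ∈ intrinsicFrontier ℝ (Ball n) ∩ φ ⁻¹' Ki.intSet :=
        ⟨hxsph, by rw [Set.mem_preimage, ← him]; exact Set.mem_image_of_mem φ hx⟩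
      exact ⟨Ki, hKi, x, hxU, by rw [hcomp x hx, gcc_closure_intSet hLg hD]⟩
    · intro Ki hKi x hxU
      have hxcov : x ∈ ⋃ D ∈ L, D.intSet := by
        rw [← gcc_support_eq hLg, hL.2.1]
        exact hxU.1
      obtain ⟨D, hD, hx⟩ := Set.mem_iUnion₂.mp hxcov
      obtain ⟨Ki', hKi', him', hdim', hcomp'⟩ := main L hL D hD
      have hKiEq : Ki' = Ki := by
        by_contra hne
        have hd := hKgcc.2.2.1 hKi'.1 hKi.1 hne
        have h1 : φ x ∈ Ki'.intSet := him' ▸ Set.mem_image_of_mem φ hx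
        exact hd.le_bot ⟨h1, hxU.2⟩
      rw [hKiEq] at hcomp'
      exact ⟨D, hD, by rw [hcomp' x hx, gcc_closure_intSet hLg hD]⟩
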